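/- Let S₁, S₂ be random variables taking values in a common measurable space, defined on a probability space together with random vectors Y' (representing y₁, …, y_{N−1}) and Y (representing y_N). Suppose that with probability at least 1 − δ over (Y', Y), TV( law of S₁ given (Y', Y), law of S₂ given (Y', Y) ) ≤ ε, for some ε, δ > 0. Then with probability at least 1 − δ/ε over Y, TV( law of S₁ given Y, law of S₂ given Y ) ≤ 2ε. -/

import Mathlib

open MeasureTheory ProbabilityTheory
open scoped ENNReal

/-- Total variation distance between two measures: supremum over measurable sets of the
absolute difference of their masses. -/
noncomputable def tvDist {α : Type*} [MeasurableSpace α] (μ ν : Measure α) : ℝ :=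
  ⨆ S : {S : Set α // MeasurableSet S}, |(μ S.1).toReal - (ν S.1).toReal|

section aux
variable {γ : Type*} [mγ : MeasurableSpace γ] (μ ν : Measure γ)
  [IsProbabilityMeasure μ] [IsProbabilityMeasure ν]

lemma abs_toReal_sub_le_one (s : Set γ) : |(μ s).toReal - (ν s).toReal| ≤ 1 := by
  have h1 : (μ s).toReal ≤ 1 := by
    simpa using ENNReal.toReal_mono (by simp) (prob_le_one (μ := μ) (s := s))
  have h2 : (ν s).toReal ≤ 1 := by
    simpa using ENNReal.toReal_mono (by simp) (prob_le_one (μ := ν) (s := s))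
  have h3 : 0 ≤ (μ s).toReal := ENNReal.toReal_nonneg
  have h4 : 0 ≤ (ν s).toReal := ENNReal.toReal_nonneg
  rw [abs_le]; constructor <;> linarith

lemma le_tvDist {s : Set γ} (hs : MeasurableSet s) :
    |(μ s).toReal - (ν s).toReal| ≤ tvDist μ ν := by
  exact le_ciSup (f := fun S : {S : Set γ // MeasurableSet S} =>
    |(μ S.1).toReal - (ν S.1).toReal|)
    ⟨1, by rintro x ⟨S, rfl⟩; exact abs_toReal_sub_le_one μ ν S.1⟩ ⟨s, hs⟩

lemma tvDist_le_of_forall {c : ℝ}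
    (h : ∀ s : Set γ, MeasurableSet s → |(μ s).toReal - (ν s).toReal| ≤ c) :
    tvDist μ ν ≤ c := by
  haveI : Nonempty {S : Set γ // MeasurableSet S} := ⟨⟨∅, MeasurableSet.empty⟩⟩
  exact ciSup_le fun S => h S.1 S.2

lemma abs_toReal_sub_le_symmDiff (ρ : Measure γ) [IsFiniteMeasure ρ] (s t : Set γ) :
    |(ρ s).toReal - (ρ t).toReal| ≤ (ρ (symmDiff s t)).toReal := by
  have hsub : ∀ u v : Set γ, ρ u ≤ ρ v + ρ (symmDiff u v) := by
    intro u v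
    refine le_trans (measure_mono (fun x hx => ?_)) (measure_union_le v (symmDiff u v))
    by_cases hv : x ∈ v
    · exact Set.mem_union_left _ hv
    · exact Set.mem_union_right _ (Or.inl ⟨hx, hv⟩)
  have key : ∀ u v : Set γ, (ρ u).toReal - (ρ v).toReal ≤ (ρ (symmDiff u v)).toReal := by
    intro u v
    have := ENNReal.toReal_mono (a := ρ u) (b := ρ v + ρ (symmDiff u v))
      (by simp [ENNReal.add_ne_top, measure_ne_top]) (hsub u v)
    rw [ENNReal.toReal_add (measure_ne_top _ _) (measure_ne_top _ _)] at this
    linarith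
  rw [abs_sub_le_iff]
  exact ⟨key s t, by simpa [symmDiff_comm] using key t s⟩

lemma tvDist_le_of_algebra {𝒜 : Set (Set γ)} (h𝒜 : IsSetAlgebra 𝒜)
    (hgen : mγ = MeasurableSpace.generateFrom 𝒜) {c : ℝ}
    (h : ∀ A ∈ 𝒜, |(μ A).toReal - (ν A).toReal| ≤ c) : tvDist μ ν ≤ c := by
  have md : (μ + ν).MeasureDense 𝒜 :=
    Measure.MeasureDense.of_generateFrom_isSetAlgebra_finite _ h𝒜 hgen
  refine tvDist_le_of_forall μ ν fun s hs => ?_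
  refine le_of_forall_pos_le_add fun e he => ?_
  obtain ⟨A, hA𝒜, hAe⟩ := md.approx s hs (measure_ne_top _ _) e he
  have hT : ((μ + ν) (symmDiff s A)).toReal < e := by
    have := ENNReal.toReal_strict_mono (by simp [ENNReal.ofReal_ne_top]) hAe
    simpa [ENNReal.toReal_ofReal he.le] using this
  have hTeq : ((μ + ν) (symmDiff s A)).toReal
      = (μ (symmDiff s A)).toReal + (ν (symmDiff s A)).toReal := by
    rw [Measure.add_apply, ENNReal.toReal_add (measure_ne_top _ _) (measure_ne_top _ _)]
  have h1 := abs_toReal_sub_le_symmDiff μ s A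
  have h2 := abs_toReal_sub_le_symmDiff ν s A
  have h3 := h A hA𝒜
  rcases abs_le.mp h1 with ⟨h1a, h1b⟩
  rcases abs_le.mp h2 with ⟨h2a, h2b⟩
  rcases abs_le.mp h3 with ⟨h3a, h3b⟩
  rw [hTeq] at hT
  rw [abs_le]
  constructor <;> linarith

lemma tvDist_eq_iSup {𝒜 : Set (Set γ)} (h𝒜 : IsSetAlgebra 𝒜)
    (hgen : mγ = MeasurableSpace.generateFrom 𝒜) {e : ℕ → Set γ} (he : 𝒜 = Set.range e) :
    tvDist μ ν = ⨆ n, |(μ (e n)).toReal - (ν (e n)).toReal| := by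
  have hemem : ∀ n, e n ∈ 𝒜 := fun n => by rw [he]; exact Set.mem_range_self n
  have hemeas : ∀ n, MeasurableSet (e n) := fun n => by
    rw [hgen]; exact MeasurableSpace.measurableSet_generateFrom (hemem n)
  have hbdd : BddAbove (Set.range fun n => |(μ (e n)).toReal - (ν (e n)).toReal|) :=
    ⟨1, by rintro x ⟨n, rfl⟩; exact abs_toReal_sub_le_one μ ν (e n)⟩
  refine le_antisymm ?_ (ciSup_le fun n => le_tvDist μ ν (hemeas n))
  refine tvDist_le_of_algebra μ ν h𝒜 hgen fun A hA => ?_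
  obtain ⟨n, rfl⟩ : ∃ n, e n = A := by
    have := hA; rw [he] at this; exact this
  exact le_ciSup hbdd n

end aux

/-- If, with probability at least `1 − δ` over `(Y', Y)`, the conditional
laws of `S₁` and `S₂` given `(Y', Y)` are within total variation `ε`, then with probability
at least `1 − δ/ε` over `Y`, the conditional laws of `S₁` and `S₂` given `Y` alone are
within total variation `2ε`. -/
theorem tv_conditioning_reduction
    {Ω α β γ : Type*} [MeasureSpace Ω] [IsProbabilityMeasure (ℙ : Measure Ω)]
    [MeasurableSpace α] [MeasurableSpace β]
    [MeasurableSpace γ] [StandardBorelSpace γ] [Nonempty γ]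
    (S₁ S₂ : Ω → γ) (Y' : Ω → β) (Y : Ω → α)
    (hS₁ : Measurable S₁) (hS₂ : Measurable S₂)
    (hY' : Measurable Y') (hY : Measurable Y)
    (ε δ : ℝ) (hε : 0 < ε) (hδ : 0 < δ)
    (h : ENNReal.ofReal (1 - δ) ≤
      ℙ {ω | tvDist ((condDistrib S₁ (fun ω' => (Y' ω', Y ω')) ℙ) (Y' ω, Y ω))
               ((condDistrib S₂ (fun ω' => (Y' ω', Y ω')) ℙ) (Y' ω, Y ω)) ≤ ε}) :
    ENNReal.ofReal (1 - δ / ε) ≤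
      ℙ {ω | tvDist ((condDistrib S₁ Y ℙ) (Y ω)) ((condDistrib S₂ Y ℙ) (Y ω)) ≤ 2 * ε} := by

  classical
  -- countable generating algebra on γ
  obtain ⟨𝒜, h𝒜, hgen, hcnt⟩ : ∃ 𝒜 : Set (Set γ), IsSetAlgebra 𝒜 ∧
      ‹MeasurableSpace γ› = MeasurableSpace.generateFrom 𝒜 ∧ 𝒜.Countable := by
    refine ⟨MeasureTheory.generateSetAlgebra (MeasurableSpace.countableGeneratingSet γ),
      isSetAlgebra_generateSetAlgebra, ?_,
      countable_generateSetAlgebra MeasurableSpace.countable_countableGeneratingSet⟩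
    rw [generateFrom_generateSetAlgebra_eq, MeasurableSpace.generateFrom_countableGeneratingSet]
  obtain ⟨e, he⟩ := hcnt.exists_eq_range ⟨∅, h𝒜.empty_mem⟩
  have hemeas : ∀ n, MeasurableSet (e n) := fun n => by
    rw [hgen]
    exact MeasurableSpace.measurableSet_generateFrom (by rw [he]; exact Set.mem_range_self n)
  set T : Ω → β × α := fun ω' => (Y' ω', Y ω') with hT_def
  have hT : Measurable T := hY'.prodMk hY
  set η₁ := condDistrib S₁ T ℙ with hη₁_def
  set η₂ := condDistrib S₂ T ℙ with hη₂_def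
  set κ₁ := condDistrib S₁ Y ℙ with hκ₁_def
  set κ₂ := condDistrib S₂ Y ℙ with hκ₂_def
  haveI : IsMarkovKernel η₁ := inferInstanceAs (IsMarkovKernel (condDistrib S₁ T ℙ))
  haveI : IsMarkovKernel η₂ := inferInstanceAs (IsMarkovKernel (condDistrib S₂ T ℙ))
  haveI : IsMarkovKernel κ₁ := inferInstanceAs (IsMarkovKernel (condDistrib S₁ Y ℙ))
  haveI : IsMarkovKernel κ₂ := inferInstanceAs (IsMarkovKernel (condDistrib S₂ Y ℙ))
  have hm : MeasurableSpace.comap Y inferInstance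
      ≤ (MeasureSpace.toMeasurableSpace : MeasurableSpace Ω) := hY.comap_le
  have hmT : MeasurableSpace.comap T inferInstance
      ≤ (MeasureSpace.toMeasurableSpace : MeasurableSpace Ω) := hT.comap_le
  have hmm : MeasurableSpace.comap Y inferInstance ≤ MeasurableSpace.comap T inferInstance := by
    have h1 : MeasurableSpace.comap Y (inferInstance : MeasurableSpace α)
        = MeasurableSpace.comap T
          (MeasurableSpace.comap Prod.snd (inferInstance : MeasurableSpace α)) :=
      (MeasurableSpace.comap_comp (f := Prod.snd) (g := T)).symm
    rw [h1]
    exact MeasurableSpace.comap_mono measurable_snd.comap_le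
  set F : Ω → ℝ := fun ω => tvDist (η₁ (T ω)) (η₂ (T ω)) with hF_def
  have hhyp : ENNReal.ofReal (1 - δ) ≤ ℙ {ω | F ω ≤ ε} := h
  have hFmeas : Measurable F := by
    have hF_eq : F = fun ω => ⨆ n, |(η₁ (T ω) (e n)).toReal - (η₂ (T ω) (e n)).toReal| := by
      funext ω
      exact tvDist_eq_iSup (η₁ (T ω)) (η₂ (T ω)) h𝒜 hgen he
    rw [hF_eq]
    refine Measurable.iSup fun n => ?_
    exact (((Kernel.measurable_coe η₁ (hemeas n)).comp hT).ennreal_toReal.sub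
      (((Kernel.measurable_coe η₂ (hemeas n)).comp hT).ennreal_toReal)).abs
  set bad : Set Ω := {ω | ε < F ω} with hbad_def
  have hB : MeasurableSet bad := measurableSet_lt measurable_const hFmeas
  have hBad_le : ℙ bad ≤ ENNReal.ofReal δ := by
    have hcompl : badᶜ = {ω | F ω ≤ ε} := by ext ω; simp [hbad_def, not_lt]
    have h2 : ENNReal.ofReal (1 - δ) ≤ 1 - ℙ bad := by
      have hx := prob_compl_eq_one_sub (μ := ℙ) hB
      rw [hcompl] at hx
      rw [← hx]; exact hhyp
    by_cases hδ1 : 1 ≤ δ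
    · refine le_trans prob_le_one ?_
      rw [← ENNReal.ofReal_one]
      exact ENNReal.ofReal_le_ofReal hδ1
    · push_neg at hδ1
      have hone : (1 : ℝ≥0∞) = ENNReal.ofReal (1 - δ) + ENNReal.ofReal δ := by
        rw [← ENNReal.ofReal_add (by linarith) hδ.le]; norm_num
      have h3 : ℙ bad = 1 - (1 - ℙ bad) :=
        (ENNReal.sub_sub_cancel ENNReal.one_ne_top prob_le_one).symm
      rw [h3]
      calc 1 - (1 - ℙ bad) ≤ 1 - ENNReal.ofReal (1 - δ) := tsub_le_tsub_left h2 1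
        _ = ENNReal.ofReal δ := by
            rw [hone, ENNReal.add_sub_cancel_left ENNReal.ofReal_ne_top]
  set Ind : Ω → ℝ := bad.indicator fun _ => (1 : ℝ) with hInd_def
  have hInd_int : Integrable Ind ℙ := (integrable_const 1).indicator hB
  set g : Ω → ℝ := ℙ[Ind|MeasurableSpace.comap Y inferInstance] with hg_def
  have hg_nonneg : 0 ≤ᵐ[ℙ] g :=
    condExp_nonneg (ae_of_all _ fun ω => Set.indicator_nonneg (fun _ _ => zero_le_one) ω)
  have hg_int : Integrable g ℙ := integrable_condExp
  have hg_meas : Measurable g := stronglyMeasurable_condExp.measurable.mono hm le_rfl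
  have hg_integral : ∫ ω, g ω ∂ℙ ≤ δ := by
    rw [hg_def, integral_condExp hm, hInd_def, integral_indicator_const (1 : ℝ) hB]
    simp only [smul_eq_mul, mul_one]
    have h4 : (ℙ bad).toReal ≤ (ENNReal.ofReal δ).toReal :=
      ENNReal.toReal_mono ENNReal.ofReal_ne_top hBad_le
    simpa [ENNReal.toReal_ofReal hδ.le, Measure.real] using h4
  have hMarkov : ℙ {ω | ε < g ω} ≤ ENNReal.ofReal (δ / ε) := by
    have h1 := mul_meas_ge_le_integral_of_nonneg hg_nonneg hg_int ε
    have h2 : (ℙ {x | ε ≤ g x}).toReal ≤ δ / ε := by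
      rw [le_div_iff₀ hε]
      calc (ℙ {x | ε ≤ g x}).toReal * ε = ε * (ℙ {x | ε ≤ g x}).toReal := mul_comm _ _
        _ ≤ ∫ ω, g ω ∂ℙ := h1
        _ ≤ δ := hg_integral
    have h3 : ℙ {ω | ε < g ω} ≤ ℙ {x | ε ≤ g x} := measure_mono fun x hx => (le_of_lt (hx : ε < g x) : ε ≤ g x)
    refine le_trans h3 ?_
    rw [ENNReal.le_ofReal_iff_toReal_le (measure_ne_top _ _) (by positivity)]
    exact h2
  have hGE : ENNReal.ofReal (1 - δ / ε) ≤ ℙ {ω | g ω ≤ ε} := by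
    have hunion : (1 : ℝ≥0∞) ≤ ℙ {ω | g ω ≤ ε} + ℙ {ω | ε < g ω} := by
      have hsub : (Set.univ : Set Ω) ⊆ {ω | g ω ≤ ε} ∪ {ω | ε < g ω} :=
        fun ω _ => le_or_gt (g ω) ε
      calc (1 : ℝ≥0∞) = ℙ Set.univ := measure_univ.symm
        _ ≤ ℙ ({ω | g ω ≤ ε} ∪ {ω | ε < g ω}) := measure_mono hsub
        _ ≤ _ := measure_union_le _ _
    have h2 : 1 - ENNReal.ofReal (δ / ε) ≤ ℙ {ω | g ω ≤ ε} := by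
      rw [tsub_le_iff_right]
      exact le_trans hunion (add_le_add le_rfl hMarkov)
    refine le_trans ?_ h2
    by_cases hc : δ / ε ≤ 1
    · refine ENNReal.le_sub_of_add_le_right ENNReal.ofReal_ne_top ?_
      rw [← ENNReal.ofReal_add (by linarith) (by positivity), ← ENNReal.ofReal_one]
      exact ENNReal.ofReal_le_ofReal (by linarith)
    · push_neg at hc
      have hle : 1 - δ / ε ≤ 0 := by linarith
      simp [ENNReal.ofReal_eq_zero.mpr hle]
  have hclaim : ∀ n, ∀ᵐ ω ∂ℙ,
      |(κ₁ (Y ω) (e n)).toReal - (κ₂ (Y ω) (e n)).toReal| ≤ ε + g ω := by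
    intro n
    set A := e n with hA_def
    have hA : MeasurableSet A := hemeas n
    set u₁ : Ω → ℝ := fun ω => (η₁ (T ω) A).toReal with hu₁_def
    set u₂ : Ω → ℝ := fun ω => (η₂ (T ω) A).toReal with hu₂_def
    have hu₁m : Measurable u₁ := ((Kernel.measurable_coe η₁ hA).comp hT).ennreal_toReal
    have hu₂m : Measurable u₂ := ((Kernel.measurable_coe η₂ hA).comp hT).ennreal_toReal
    have hb1 : ∀ (p : β × α), ((η₁ p) A).toReal ≤ 1 := fun p => by
      have := ENNReal.toReal_mono ENNReal.one_ne_top (prob_le_one (μ := η₁ p) (s := A))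
      simpa using this
    have hb2 : ∀ (p : β × α), ((η₂ p) A).toReal ≤ 1 := fun p => by
      have := ENNReal.toReal_mono ENNReal.one_ne_top (prob_le_one (μ := η₂ p) (s := A))
      simpa using this
    have hu₁int : Integrable u₁ ℙ :=
      (integrable_const (1 : ℝ)).mono' hu₁m.aestronglyMeasurable
        (ae_of_all _ fun ω => by
          rw [Real.norm_eq_abs, abs_of_nonneg ENNReal.toReal_nonneg]; exact hb1 (T ω))
    have hu₂int : Integrable u₂ ℙ :=
      (integrable_const (1 : ℝ)).mono' hu₂m.aestronglyMeasurable
        (ae_of_all _ fun ω => by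
          rw [Real.norm_eq_abs, abs_of_nonneg ENNReal.toReal_nonneg]; exact hb2 (T ω))
    have c₁ : (fun ω => (κ₁ (Y ω) A).toReal) =ᵐ[ℙ] ℙ⟦S₁ ⁻¹' A|MeasurableSpace.comap Y inferInstance⟧ :=
      condDistrib_ae_eq_condExp hY hS₁ hA
    have c₂ : (fun ω => (κ₂ (Y ω) A).toReal) =ᵐ[ℙ] ℙ⟦S₂ ⁻¹' A|MeasurableSpace.comap Y inferInstance⟧ :=
      condDistrib_ae_eq_condExp hY hS₂ hA
    have d₁ : u₁ =ᵐ[ℙ] ℙ⟦S₁ ⁻¹' A|MeasurableSpace.comap T inferInstance⟧ := condDistrib_ae_eq_condExp hT hS₁ hA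
    have d₂ : u₂ =ᵐ[ℙ] ℙ⟦S₂ ⁻¹' A|MeasurableSpace.comap T inferInstance⟧ := condDistrib_ae_eq_condExp hT hS₂ hA
    have t₁ : (fun ω => (κ₁ (Y ω) A).toReal) =ᵐ[ℙ] ℙ[u₁|MeasurableSpace.comap Y inferInstance] := by
      have e₁ : ℙ[ℙ⟦S₁ ⁻¹' A|MeasurableSpace.comap T inferInstance⟧|MeasurableSpace.comap Y inferInstance] =ᵐ[ℙ] ℙ⟦S₁ ⁻¹' A|MeasurableSpace.comap Y inferInstance⟧ := condExp_condExp_of_le hmm hmT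
      have e₂ : ℙ[u₁|MeasurableSpace.comap Y inferInstance] =ᵐ[ℙ] ℙ[ℙ⟦S₁ ⁻¹' A|MeasurableSpace.comap T inferInstance⟧|MeasurableSpace.comap Y inferInstance] := condExp_congr_ae d₁
      exact c₁.trans (e₁.symm.trans e₂.symm)
    have t₂ : (fun ω => (κ₂ (Y ω) A).toReal) =ᵐ[ℙ] ℙ[u₂|MeasurableSpace.comap Y inferInstance] := by
      have e₁ : ℙ[ℙ⟦S₂ ⁻¹' A|MeasurableSpace.comap T inferInstance⟧|MeasurableSpace.comap Y inferInstance] =ᵐ[ℙ] ℙ⟦S₂ ⁻¹' A|MeasurableSpace.comap Y inferInstance⟧ := condExp_condExp_of_le hmm hmT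
      have e₂ : ℙ[u₂|MeasurableSpace.comap Y inferInstance] =ᵐ[ℙ] ℙ[ℙ⟦S₂ ⁻¹' A|MeasurableSpace.comap T inferInstance⟧|MeasurableSpace.comap Y inferInstance] := condExp_congr_ae d₂
      exact c₂.trans (e₁.symm.trans e₂.symm)
    have hsub : ℙ[u₁ - u₂|MeasurableSpace.comap Y inferInstance] =ᵐ[ℙ] ℙ[u₁|MeasurableSpace.comap Y inferInstance] - ℙ[u₂|MeasurableSpace.comap Y inferInstance] := condExp_sub hu₁int hu₂int _
    have hsub' : ℙ[u₂ - u₁|MeasurableSpace.comap Y inferInstance] =ᵐ[ℙ] ℙ[u₂|MeasurableSpace.comap Y inferInstance] - ℙ[u₁|MeasurableSpace.comap Y inferInstance] := condExp_sub hu₂int hu₁int _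
    have hbnd : ∀ ω, |u₁ ω - u₂ ω| ≤ ε + Ind ω := by
      intro ω
      by_cases hω : ω ∈ bad
      · have h1 : |u₁ ω - u₂ ω| ≤ 1 := abs_toReal_sub_le_one (η₁ (T ω)) (η₂ (T ω)) A
        have h0 : Ind ω = 1 := Set.indicator_of_mem hω _
        rw [h0]; linarith
      · have h0 : Ind ω = 0 := Set.indicator_of_notMem hω _
        have h1 : |u₁ ω - u₂ ω| ≤ F ω := le_tvDist (η₁ (T ω)) (η₂ (T ω)) hA
        have h2 : F ω ≤ ε := not_lt.mp (by simpa [hbad_def] using hω)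
        rw [h0]; linarith
    have hv_int : Integrable (fun ω => ε + Ind ω) ℙ := (integrable_const ε).add hInd_int
    have hmono1 : ℙ[u₁ - u₂|MeasurableSpace.comap Y inferInstance] ≤ᵐ[ℙ] ℙ[fun ω => ε + Ind ω|MeasurableSpace.comap Y inferInstance] :=
      condExp_mono (hu₁int.sub hu₂int) hv_int (ae_of_all _ fun ω => by
        have h5 := hbnd ω; rw [abs_le] at h5
        simpa [Pi.sub_apply] using h5.2)
    have hmono2 : ℙ[u₂ - u₁|MeasurableSpace.comap Y inferInstance] ≤ᵐ[ℙ] ℙ[fun ω => ε + Ind ω|MeasurableSpace.comap Y inferInstance] :=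
      condExp_mono (hu₂int.sub hu₁int) hv_int (ae_of_all _ fun ω => by
        have h5 := hbnd ω; rw [abs_le] at h5
        simp only [Pi.sub_apply]; linarith [h5.1])
    have hvcond : ℙ[fun ω => ε + Ind ω|MeasurableSpace.comap Y inferInstance] =ᵐ[ℙ] fun ω => ε + g ω := by
      have heq : (fun ω => ε + Ind ω) = (fun _ => ε) + Ind := rfl
      rw [heq]
      refine (condExp_add (integrable_const ε) hInd_int _).trans (Filter.EventuallyEq.of_eq ?_)
      rw [condExp_const hm]
      rfl
    filter_upwards [t₁, t₂, hsub, hsub', hmono1, hmono2, hvcond] with ω h1 h2 h3 h4 h5 h6 h7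
    simp only [Pi.sub_apply] at h3 h4
    have e5 : (ℙ[u₁ - u₂|MeasurableSpace.comap Y inferInstance]) ω ≤ ε + g ω := h7 ▸ h5
    have e6 : (ℙ[u₂ - u₁|MeasurableSpace.comap Y inferInstance]) ω ≤ ε + g ω := h7 ▸ h6
    rw [h1, h2, abs_le]
    constructor <;> linarith
  have hae : ∀ᵐ ω ∂ℙ, ∀ n,
      |(κ₁ (Y ω) (e n)).toReal - (κ₂ (Y ω) (e n)).toReal| ≤ ε + g ω :=
    ae_all_iff.mpr hclaim
  have hfinal : ∀ᵐ ω ∂ℙ,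
      ω ∈ {ω | g ω ≤ ε} → ω ∈ {ω | tvDist (κ₁ (Y ω)) (κ₂ (Y ω)) ≤ 2 * ε} := by
    filter_upwards [hae] with ω hn hgω
    have htv : tvDist (κ₁ (Y ω)) (κ₂ (Y ω)) ≤ ε + g ω := by
      rw [tvDist_eq_iSup (κ₁ (Y ω)) (κ₂ (Y ω)) h𝒜 hgen he]
      exact ciSup_le hn
    have : tvDist (κ₁ (Y ω)) (κ₂ (Y ω)) ≤ 2 * ε := by
      have hgε : g ω ≤ ε := hgω
      linarith
    exact this
  calc ENNReal.ofReal (1 - δ / ε) ≤ ℙ {ω | g ω ≤ ε} := hGE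
    _ ≤ ℙ {ω | tvDist (κ₁ (Y ω)) (κ₂ (Y ω)) ≤ 2 * ε} := measure_mono_ae hfinal
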